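/- (Theorem 2.1, part 2 — minimum-norm solution.) Let w be a symmetric n×n real matrix with nonnegative entries and zero diagonal, let Y be a skew-symmetric n×n real matrix, and define F(s) = ∑_{i,j} w_{ij} (s_j - s_i - Y_{ij})². Then among all minimizers of F there is a unique one, s*, of minimal Euclidean norm, and s* is characterized by the two conditions: Δ₀ s* = -div Y, and s* is orthogonal (in the standard Euclidean inner product on Fin n → ℝ) to the kernel of Δ₀. -/

import Mathlib

open Matrix

/-- The weighted graph Laplacian `Δ₀` associated with a weight matrix `w`. -/
def lap {n : ℕ} (w : Matrix (Fin n) (Fin n) ℝ) : Matrix (Fin n) (Fin n) ℝ :=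
  Matrix.of fun i j => if i = j then ∑ k, w i k else -(w i j)

/-- The divergence of an edge flow `Y`: `(div Y) i = ∑_j w_{ij} Y_{ij}`. -/
def dvg {n : ℕ} (w Y : Matrix (Fin n) (Fin n) ℝ) : Fin n → ℝ :=
  fun i => ∑ j, w i j * Y i j

/-- The weighted least-squares ranking objective. -/
def F {n : ℕ} (w Y : Matrix (Fin n) (Fin n) ℝ) (s : Fin n → ℝ) : ℝ :=
  ∑ i, ∑ j, w i j * (s j - s i - Y i j) ^ 2

/-- `s` is a minimizer of the objective `F`. -/
def IsMinimizer {n : ℕ} (w Y : Matrix (Fin n) (Fin n) ℝ) (s : Fin n → ℝ) : Prop :=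
  ∀ t : Fin n → ℝ, F w Y s ≤ F w Y t

section Stmt8Aux
variable {n : ℕ}


lemma lap_mulVec (w : Matrix (Fin n) (Fin n) ℝ) (hwdiag : ∀ i, w i i = 0)
    (s : Fin n → ℝ) (i : Fin n) :
    (lap w).mulVec s i = ∑ j, w i j * (s i - s j) := by
  have h : ∀ j, lap w i j * s j
      = (if i = j then (∑ k, w i k) * s i else 0) + (-(w i j) * s j) := by
    intro j
    by_cases hij : i = j
    · subst hij; simp [lap, hwdiag i]
    · simp [lap, hij]
  simp only [Matrix.mulVec, dotProduct]
  rw [Finset.sum_congr rfl (fun j _ => h j), Finset.sum_add_distrib,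
    Finset.sum_ite_eq]
  simp [Finset.sum_mul, mul_sub, Finset.sum_sub_distrib]
  ring

lemma cross (w Y : Matrix (Fin n) (Fin n) ℝ) (hwsymm : wᵀ = w)
    (hwdiag : ∀ i, w i i = 0) (hYskew : Yᵀ = -Y) (s u : Fin n → ℝ) :
    ∑ i, ∑ j, w i j * (s j - s i - Y i j) * (u j - u i)
      = 2 * ∑ i, ((lap w).mulVec s i + dvg w Y i) * u i := by
  have h1 : ∀ i j, w j i = w i j := fun i j => congrFun (congrFun hwsymm i) j
  have h2 : ∀ i j, Y j i = -Y i j := by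
    intro i j; have := congrFun (congrFun hYskew i) j; simpa using this
  have hswap : ∑ i, ∑ j, w i j * (s j - s i - Y i j) * u j
      = ∑ i, ∑ j, w i j * (s i - s j + Y i j) * u i := by
    rw [Finset.sum_comm]
    refine Finset.sum_congr rfl fun i _ => Finset.sum_congr rfl fun j _ => ?_
    rw [h1 i j, h2 i j]; ring
  have expand : ∑ i, ∑ j, w i j * (s j - s i - Y i j) * (u j - u i)
      = ∑ i, ∑ j, w i j * (s j - s i - Y i j) * u j
        - ∑ i, ∑ j, w i j * (s j - s i - Y i j) * u i := by
    rw [← Finset.sum_sub_distrib]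
    refine Finset.sum_congr rfl fun i _ => ?_
    rw [← Finset.sum_sub_distrib]
    exact Finset.sum_congr rfl fun j _ => by ring
  rw [expand, hswap, ← Finset.sum_sub_distrib, Finset.mul_sum]
  refine Finset.sum_congr rfl fun i _ => ?_
  rw [← Finset.sum_sub_distrib, lap_mulVec w hwdiag]
  show _ = 2 * (((∑ j, w i j * (s i - s j)) + ∑ j, w i j * Y i j) * u i)
  rw [← Finset.sum_add_distrib,
    show (2:ℝ) * ((∑ j, (w i j * (s i - s j) + w i j * Y i j)) * u i)
      = (∑ j, (w i j * (s i - s j) + w i j * Y i j)) * (2 * u i) by ring,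
    Finset.sum_mul]
  exact Finset.sum_congr rfl fun j _ => by ring

lemma F_expand (w Y : Matrix (Fin n) (Fin n) ℝ) (s u : Fin n → ℝ) :
    F w Y (fun k => s k + u k)
      = F w Y s + 2 * ∑ i, ∑ j, w i j * (s j - s i - Y i j) * (u j - u i)
        + ∑ i, ∑ j, w i j * (u j - u i) ^ 2 := by
  simp only [F]
  rw [Finset.mul_sum, ← Finset.sum_add_distrib, ← Finset.sum_add_distrib]
  refine Finset.sum_congr rfl fun i _ => ?_
  rw [Finset.mul_sum, ← Finset.sum_add_distrib, ← Finset.sum_add_distrib]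
  exact Finset.sum_congr rfl fun j _ => by ring

lemma Q_nonneg (w : Matrix (Fin n) (Fin n) ℝ) (hwnonneg : ∀ i j, 0 ≤ w i j)
    (u : Fin n → ℝ) : 0 ≤ ∑ i, ∑ j, w i j * (u j - u i) ^ 2 :=
  Finset.sum_nonneg fun i _ => Finset.sum_nonneg fun j _ =>
    mul_nonneg (hwnonneg i j) (sq_nonneg _)

lemma Q_eq (w : Matrix (Fin n) (Fin n) ℝ) (hwsymm : wᵀ = w)
    (hwdiag : ∀ i, w i i = 0) (u : Fin n → ℝ) :
    ∑ i, ∑ j, w i j * (u j - u i) ^ 2 = 2 * ∑ i, (lap w).mulVec u i * u i := by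
  have h := cross w 0 hwsymm hwdiag (by simp) u u
  simp only [dvg, Matrix.zero_apply, mul_zero, Finset.sum_const_zero, add_zero,
    sub_zero] at h
  rw [← h]
  exact Finset.sum_congr rfl fun i _ => Finset.sum_congr rfl fun j _ => by ring

lemma ker_iff (w : Matrix (Fin n) (Fin n) ℝ) (hwsymm : wᵀ = w)
    (hwnonneg : ∀ i j, 0 ≤ w i j) (hwdiag : ∀ i, w i i = 0) (u : Fin n → ℝ) :
    (lap w).mulVec u = 0 ↔ ∀ i j, w i j * (u j - u i) = 0 := by
  constructor
  · intro h
    have hQ : ∑ i, ∑ j, w i j * (u j - u i) ^ 2 = 0 := by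
      rw [Q_eq w hwsymm hwdiag, h]; simp
    have h1 := (Finset.sum_eq_zero_iff_of_nonneg
      (fun i _ => Finset.sum_nonneg fun j _ =>
        mul_nonneg (hwnonneg i j) (sq_nonneg _))).mp hQ
    intro i j
    have h2 := (Finset.sum_eq_zero_iff_of_nonneg
      (fun j _ => mul_nonneg (hwnonneg i j) (sq_nonneg _))).mp
      (h1 i (Finset.mem_univ i)) j (Finset.mem_univ j)
    rcases mul_eq_zero.mp h2 with hw | hd
    · rw [hw, zero_mul]
    · rw [pow_eq_zero_iff (by norm_num) |>.mp hd, mul_zero]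
  · intro h
    funext i
    rw [lap_mulVec w hwdiag]
    simp only [Pi.zero_apply]
    refine Finset.sum_eq_zero fun j _ => ?_
    have := h i j
    nlinarith [this]


lemma min_iff (w Y : Matrix (Fin n) (Fin n) ℝ) (hwsymm : wᵀ = w)
    (hwnonneg : ∀ i j, 0 ≤ w i j) (hwdiag : ∀ i, w i i = 0) (hYskew : Yᵀ = -Y)
    (s : Fin n → ℝ) :
    IsMinimizer w Y s ↔ (lap w).mulVec s = -(dvg w Y) := by
  constructor
  · intro hmin
    set g : Fin n → ℝ := fun i => (lap w).mulVec s i + dvg w Y i with hg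
    have key : ∀ ε : ℝ, 0 ≤ 4 * ε * (∑ i, g i * g i)
        + ε ^ 2 * ∑ i, ∑ j, w i j * (g j - g i) ^ 2 := by
      intro ε
      have := hmin (fun k => s k + ε * g k)
      have hx := F_expand w Y s (fun k => ε * g k)
      rw [cross w Y hwsymm hwdiag hYskew] at hx
      have e1 : ∑ i, ((lap w).mulVec s i + dvg w Y i) * (ε * g i)
          = ε * ∑ i, g i * g i := by
        rw [Finset.mul_sum]; exact Finset.sum_congr rfl fun i _ => by rw [hg]; ring
      have e2 : ∑ i, ∑ j, w i j * (ε * g j - ε * g i) ^ 2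
          = ε ^ 2 * ∑ i, ∑ j, w i j * (g j - g i) ^ 2 := by
        rw [Finset.mul_sum]
        refine Finset.sum_congr rfl fun i _ => ?_
        rw [Finset.mul_sum]
        exact Finset.sum_congr rfl fun j _ => by ring
      rw [hx, e1, e2] at this
      nlinarith [this]
    have ha : (∑ i, g i * g i) = 0 := by
      by_contra hne
      have hapos : 0 < ∑ i, g i * g i :=
        lt_of_le_of_ne (Finset.sum_nonneg fun i _ => mul_self_nonneg _) (Ne.symm hne)
      set a := ∑ i, g i * g i
      set b := ∑ i, ∑ j, w i j * (g j - g i) ^ 2 with hb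
      have hbnn : 0 ≤ b := Q_nonneg w hwnonneg g
      have hk := key (-(4 * a) / (b + 1))
      have hb1 : 0 < b + 1 := by linarith
      have hε : (4:ℝ) * (-(4 * a) / (b + 1)) * a + (-(4 * a) / (b + 1)) ^ 2 * b
          = -(16 * a ^ 2) / (b + 1) ^ 2 := by
        field_simp
        ring
      rw [hε] at hk
      have hc : (0:ℝ) < (b + 1) ^ 2 := by positivity
      have h0 := (le_div_iff₀ hc).mp hk
      nlinarith [mul_pos hapos hapos]
    have hz : ∀ i, g i = 0 := by
      intro i
      have := (Finset.sum_eq_zero_iff_of_nonneg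
        (fun i _ => mul_self_nonneg (g i))).mp ha i (Finset.mem_univ i)
      exact mul_self_eq_zero.mp this
    funext i
    have := hz i
    simp only [hg] at this
    simp only [Pi.neg_apply]
    linarith
  · intro heq t
    have hx := F_expand w Y s (fun k => t k - s k)
    rw [cross w Y hwsymm hwdiag hYskew] at hx
    have e0 : ∑ i, ((lap w).mulVec s i + dvg w Y i) * (t i - s i) = 0 := by
      refine Finset.sum_eq_zero fun i _ => ?_
      have : (lap w).mulVec s i = -(dvg w Y i) := by rw [heq]; rfl
      rw [this]; ring
    have e3 : (fun k => s k + (t k - s k)) = t := by funext k; ring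
    rw [e3, e0] at hx
    have := Q_nonneg w hwnonneg (fun k => t k - s k)
    rw [hx]; linarith

lemma dvg_orth (w Y : Matrix (Fin n) (Fin n) ℝ) (hwsymm : wᵀ = w)
    (hwnonneg : ∀ i j, 0 ≤ w i j) (hwdiag : ∀ i, w i i = 0) (hYskew : Yᵀ = -Y)
    (v : Fin n → ℝ) (hv : (lap w).mulVec v = 0) :
    ∑ i, dvg w Y i * v i = 0 := by
  have h1 : ∀ i j, w j i = w i j := fun i j => congrFun (congrFun hwsymm i) j
  have h2 : ∀ i j, Y j i = -Y i j := by
    intro i j; have := congrFun (congrFun hYskew i) j; simpa using this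
  have hker := (ker_iff w hwsymm hwnonneg hwdiag v).mp hv
  have key : ∑ i, dvg w Y i * v i = - ∑ i, dvg w Y i * v i := by
    calc ∑ i, dvg w Y i * v i
        = ∑ i, ∑ j, w i j * Y i j * v i := by
          refine Finset.sum_congr rfl fun i _ => ?_
          rw [dvg, Finset.sum_mul]
      _ = ∑ i, ∑ j, w i j * Y i j * v j := by
          refine Finset.sum_congr rfl fun i _ => Finset.sum_congr rfl fun j _ => ?_
          have hw := hker i j
          have : w i j * Y i j * v j - w i j * Y i j * v i
              = Y i j * (w i j * (v j - v i)) := by ring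
          rw [hw, mul_zero] at this
          linarith
      _ = ∑ i, ∑ j, -(w i j * Y i j * v i) := by
          rw [Finset.sum_comm]
          refine Finset.sum_congr rfl fun i _ => Finset.sum_congr rfl fun j _ => ?_
          rw [h1 i j, h2 i j]; ring
      _ = - ∑ i, dvg w Y i * v i := by
          have hpt : ∀ i : Fin n, ∑ j, -(w i j * Y i j * v i)
              = -(dvg w Y i * v i) := by
            intro i
            rw [Finset.sum_neg_distrib, dvg, Finset.sum_mul]
          rw [Finset.sum_congr rfl (fun i _ => hpt i), Finset.sum_neg_distrib]
  linarith

lemma split_sq (q d : Fin n → ℝ) (h : ∑ i, q i * d i = 0) :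
    ∑ i, (q i + d i) ^ 2 = ∑ i, q i ^ 2 + ∑ i, d i ^ 2 := by
  have hpt : ∀ i : Fin n, (q i + d i) ^ 2 = q i ^ 2 + 2 * (q i * d i) + d i ^ 2 :=
    fun i => by ring
  rw [Finset.sum_congr rfl fun i _ => hpt i, Finset.sum_add_distrib,
    Finset.sum_add_distrib, ← Finset.mul_sum, h, mul_zero, add_zero]


end Stmt8Aux

theorem stmt8 {n : ℕ} (w Y : Matrix (Fin n) (Fin n) ℝ)
    (hwsymm : wᵀ = w) (hwnonneg : ∀ i j, 0 ≤ w i j)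
    (hwdiag : ∀ i, w i i = 0) (hYskew : Yᵀ = -Y) :
    ∃ sstar : Fin n → ℝ,
      -- `sstar` is a minimizer of `F` of minimal Euclidean norm
      (IsMinimizer w Y sstar ∧
        ∀ t : Fin n → ℝ, IsMinimizer w Y t →
          ∑ i, (sstar i) ^ 2 ≤ ∑ i, (t i) ^ 2) ∧
      -- it is the unique such minimum-norm minimizer
      (∀ t : Fin n → ℝ,
        (IsMinimizer w Y t ∧
          ∀ u : Fin n → ℝ, IsMinimizer w Y u →
            ∑ i, (t i) ^ 2 ≤ ∑ i, (u i) ^ 2) → t = sstar) ∧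
      -- and it is characterized by the normal equation together with
      -- orthogonality to the kernel of the Laplacian
      (∀ s : Fin n → ℝ,
        s = sstar ↔
          ((lap w).mulVec s = -(dvg w Y) ∧
            ∀ v : Fin n → ℝ, (lap w).mulVec v = 0 → ∑ i, s i * v i = 0)) := by

  classical
  have h1 : ∀ i j, w j i = w i j := fun i j => congrFun (congrFun hwsymm i) j
  have hsymL : ∀ i j, lap w j i = lap w i j := by
    intro i j
    by_cases hij : i = j
    · rw [hij]
    · simp [lap, hij, Ne.symm hij, h1 i j]
  set T : EuclideanSpace ℝ (Fin n) →ₗ[ℝ] EuclideanSpace ℝ (Fin n) :=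
    Matrix.toEuclideanLin (lap w) with hTdef
  have hT : ∀ x : EuclideanSpace ℝ (Fin n), T x = (lap w).mulVec x := fun _ => rfl
  have hip : ∀ x y : EuclideanSpace ℝ (Fin n), inner ℝ x y = ∑ i, x i * y i :=
    fun x y => by rw [PiLp.inner_apply]; simp [mul_comm]
  have hTsym : ∀ x y : EuclideanSpace ℝ (Fin n),
      inner ℝ (T x) y = inner ℝ x (T y) := by
    intro x y
    rw [hip, hip]
    calc ∑ i, T x i * y i
        = ∑ i, ∑ j, lap w i j * x j * y i := by
          refine Finset.sum_congr rfl fun i _ => ?_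
          rw [hT]
          show (∑ j, lap w i j * x j) * y i = _
          rw [Finset.sum_mul]
      _ = ∑ i, ∑ j, lap w j i * x i * y j := Finset.sum_comm
      _ = ∑ i, x i * T y i := by
          refine Finset.sum_congr rfl fun i _ => ?_
          rw [hT]
          show _ = x i * ∑ j, lap w i j * y j
          rw [Finset.mul_sum]
          exact Finset.sum_congr rfl fun j _ => by rw [hsymL i j]; ring
  set K := LinearMap.ker T with hK
  have horth_range : (LinearMap.range T)ᗮ ≤ K := by
    intro y hy
    rw [hK, LinearMap.mem_ker]
    have h0 : inner ℝ (T y) (T y) = 0 := by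
      have := (Submodule.mem_orthogonal _ y).mp hy (T (T y)) ⟨T y, rfl⟩
      rwa [hTsym] at this
    exact inner_self_eq_zero.mp h0
  have hrange : Kᗮ ≤ LinearMap.range T := by
    have h := Submodule.orthogonal_le horth_range
    rwa [Submodule.orthogonal_orthogonal] at h
  have hbmem : WithLp.toLp 2 (-(dvg w Y)) ∈ Kᗮ := by
    rw [Submodule.mem_orthogonal]
    intro u hu
    rw [hip]
    have hu' : (lap w).mulVec u = 0 := by rw [← hT u, LinearMap.mem_ker.mp hu]; rfl
    have hdo := dvg_orth w Y hwsymm hwnonneg hwdiag hYskew u hu'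
    calc ∑ i, u i * (-(dvg w Y)) i
        = ∑ i, -(dvg w Y i * u i) := Finset.sum_congr rfl fun i _ => by
          simp [Pi.neg_apply]; ring
      _ = 0 := by rw [Finset.sum_neg_distrib, hdo, neg_zero]
  obtain ⟨s0, hs0⟩ := hrange hbmem
  obtain ⟨k, hk, p, hp, hdecomp⟩ := K.exists_add_mem_mem_orthogonal s0
  have hTp : T p = WithLp.toLp 2 (-(dvg w Y)) := by
    have h := hs0
    rw [hdecomp, map_add, LinearMap.mem_ker.mp hk, zero_add] at h
    exact h
  set q : Fin n → ℝ := WithLp.ofLp p with hq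
  have hmulq : (lap w).mulVec q = -(dvg w Y) := congrArg WithLp.ofLp hTp
  have horthq : ∀ v : Fin n → ℝ, (lap w).mulVec v = 0 → ∑ i, q i * v i = 0 := by
    intro v hv
    have hvK : WithLp.toLp 2 v ∈ K :=
      LinearMap.mem_ker.mpr (congrArg (WithLp.toLp 2) hv)
    have h := (Submodule.mem_orthogonal K p).mp hp (WithLp.toLp 2 v) hvK
    rw [hip] at h
    calc ∑ i, q i * v i = ∑ i, v i * p i :=
          Finset.sum_congr rfl fun i _ => mul_comm _ _
      _ = 0 := h
  have hminq : IsMinimizer w Y q :=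
    (min_iff w Y hwsymm hwnonneg hwdiag hYskew q).mpr hmulq
  have hkerdiff : ∀ t : Fin n → ℝ, (lap w).mulVec t = -(dvg w Y) →
      (lap w).mulVec (t - q) = 0 := by
    intro t ht
    rw [Matrix.mulVec_sub, ht, hmulq, sub_self]
  have hnormsplit : ∀ t : Fin n → ℝ, IsMinimizer w Y t →
      ∑ i, t i ^ 2 = ∑ i, q i ^ 2 + ∑ i, (t i - q i) ^ 2 := by
    intro t ht
    have hd := hkerdiff t ((min_iff w Y hwsymm hwnonneg hwdiag hYskew t).mp ht)
    have hc := horthq (t - q) hd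
    have hc' : ∑ i, q i * (t i - q i) = 0 := by
      rw [← hc]; exact Finset.sum_congr rfl fun i _ => by simp [Pi.sub_apply]
    have := split_sq q (fun i => t i - q i) hc'
    rw [← this]
    exact Finset.sum_congr rfl fun i _ => by ring
  refine ⟨q, ⟨hminq, ?_⟩, ?_, ?_⟩
  · intro t ht
    have h := hnormsplit t ht
    have hnn : 0 ≤ ∑ i, (t i - q i) ^ 2 :=
      Finset.sum_nonneg fun i _ => sq_nonneg _
    linarith
  · rintro t ⟨ht, htmin⟩
    have h := hnormsplit t ht
    have hle := htmin q hminq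
    have hz : ∑ i, (t i - q i) ^ 2 = 0 := by
      have hnn : 0 ≤ ∑ i, (t i - q i) ^ 2 :=
        Finset.sum_nonneg fun i _ => sq_nonneg _
      linarith
    funext i
    have := (Finset.sum_eq_zero_iff_of_nonneg (fun i _ => sq_nonneg (t i - q i))).mp
      hz i (Finset.mem_univ i)
    have := pow_eq_zero_iff (n := 2) (by norm_num) |>.mp this
    linarith [sub_eq_zero.mp this]
  · intro s
    constructor
    · rintro rfl
      exact ⟨hmulq, horthq⟩
    · rintro ⟨hs1, hs2⟩
      have hd := hkerdiff s hs1
      have e1 : ∑ i, s i * (s - q) i = 0 := hs2 (s - q) hd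
      have e2 : ∑ i, q i * (s - q) i = 0 := horthq (s - q) hd
      have e3 : ∑ i, (s i - q i) ^ 2 = 0 := by
        have : ∑ i, (s i - q i) ^ 2 = ∑ i, (s i * (s - q) i - q i * (s - q) i) :=
          Finset.sum_congr rfl fun i _ => by simp [Pi.sub_apply]; ring
        rw [this, Finset.sum_sub_distrib, e1, e2, sub_zero]
      funext i
      have := (Finset.sum_eq_zero_iff_of_nonneg (fun i _ => sq_nonneg (s i - q i))).mp
        e3 i (Finset.mem_univ i)
      have := pow_eq_zero_iff (n := 2) (by norm_num) |>.mp this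
      linarith [sub_eq_zero.mp this]
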